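/- Let D = {x ∈ ℝ^M : a < |x| < b}, μ ≥ 0, and q = 2 + 4/M (so γ_q q = 2, where γ_q = M(q-2)/(2q)). Under the same hypothesis on F as above, there exists c₁ > 0 such that for all 0 < c < c₁ the functional E(v) = (1/2)∫_D |∇v|² - ∫_D |x|^μ F(v) is coercive and bounded below on S_c = {v ∈ H¹₀(D) : ∫_D |x|^μ v² = c²}. -/

import Mathlib

open MeasureTheory Filter Set

/-- The constrained energy functional `E(v) = (1/2)∫_D |∇v|² - ∫_D |x|^μ F(v)`. -/
noncomputable def energy {M : ℕ} (D : Set (EuclideanSpace ℝ (Fin M))) (μ : ℝ) (F : ℝ → ℝ)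
    (v : EuclideanSpace ℝ (Fin M) → ℝ) : ℝ :=
  (1/2) * (∫ x in D, ‖gradient v x‖ ^ 2) - ∫ x in D, ‖x‖ ^ μ * F (v x)

/-- Membership in (a dense subclass of) `H¹₀(D)`: `C¹` functions compactly supported in `D`. -/
def H10mem {M : ℕ} (D : Set (EuclideanSpace ℝ (Fin M))) (v : EuclideanSpace ℝ (Fin M) → ℝ) :
    Prop :=
  ContDiff ℝ 1 v ∧ HasCompactSupport v ∧ tsupport v ⊆ D


open ENNReal NNReal

variable {M : ℕ}

lemma norm_gradient_eq (v : EuclideanSpace ℝ (Fin M) → ℝ) (x : EuclideanSpace ℝ (Fin M)) :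
    ‖gradient v x‖ = ‖fderiv ℝ v x‖ := by
  simp [gradient, LinearIsometryEquiv.norm_map]

-- conversion lemma: lintegral of nnnorm rpow = ofReal of integral
lemma lint_rpow {E : Type*} [MeasurableSpace E] [TopologicalSpace E] [BorelSpace E]
    {ν : Measure E} [IsFiniteMeasureOnCompacts ν] {G : Type*} [NormedAddCommGroup G]
    (w : E → G) (hw : Continuous w) (hcs : HasCompactSupport w) {r : ℝ} (hr : 0 < r) :
    ∫⁻ x, (‖w x‖₊ : ℝ≥0∞) ^ r ∂ν = ENNReal.ofReal (∫ x, ‖w x‖ ^ r ∂ν) := by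
  have hcont : Continuous (fun x => ‖w x‖ ^ r) := by
    apply Continuous.rpow_const (by fun_prop)
    intro x; right; exact hr.le
  have hcs' : HasCompactSupport (fun x => ‖w x‖ ^ r) := by
    apply hcs.comp_left (g := fun s : G => ‖s‖ ^ r)
    simp [Real.zero_rpow hr.ne']
  have hint : Integrable (fun x => ‖w x‖ ^ r) ν := hcont.integrable_of_hasCompactSupport hcs'
  rw [MeasureTheory.ofReal_integral_eq_lintegral_ofReal hint
    (Eventually.of_forall fun x => Real.rpow_nonneg (norm_nonneg _) r)]
  congr 1
  ext x
  rw [← ENNReal.ofReal_rpow_of_nonneg (norm_nonneg _) hr.le, ofReal_norm, enorm_eq_nnnorm]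


lemma gn (hM : 3 ≤ M) {q : ℝ} (hq : q = 2 + 4 / (M : ℝ)) :
    ∃ SC : ℝ, 0 ≤ SC ∧ ∀ v : EuclideanSpace ℝ (Fin M) → ℝ, ContDiff ℝ 1 v →
      HasCompactSupport v →
      ∫ x, |v x| ^ q ≤ SC * (∫ x, (v x) ^ 2) ^ (2 / (M : ℝ)) * ∫ x, ‖fderiv ℝ v x‖ ^ 2 := by
  set m : ℝ := (M : ℝ) with hm
  have hm3 : (3 : ℝ) ≤ m := by rw [hm]; exact_mod_cast hM
  have hm0 : (0 : ℝ) < m := by linarith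
  have hm2 : (0 : ℝ) < m - 2 := by linarith
  set p'r : ℝ := 2 * m / (m - 2) with hp'r
  have hp'r0 : 0 < p'r := by positivity
  set p' : ℝ≥0 := Real.toNNReal p'r with hp'def
  have hp'coe : (p' : ℝ) = p'r := Real.coe_toNNReal _ hp'r0.le
  have hp'0 : p' ≠ 0 := by
    rw [hp'def]
    exact (Real.toNNReal_pos.mpr hp'r0).ne'
  set C : ℝ≥0 :=
    SNormLESNormFDerivOfEqConst ℝ (volume : Measure (EuclideanSpace ℝ (Fin M))) 2 with hC
  refine ⟨(C : ℝ) ^ 2, by positivity, ?_⟩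
  intro v hv hcs
  have hvc : Continuous v := hv.continuous
  have hfc : Continuous (fderiv ℝ v) := ContDiff.continuous_fderiv hv one_ne_zero
  have hfcs : HasCompactSupport (fderiv ℝ v) := hcs.fderiv (𝕜 := ℝ)
  set A := ∫⁻ x, (‖v x‖₊ : ℝ≥0∞) ^ q with hA
  set B := ∫⁻ x, (‖v x‖₊ : ℝ≥0∞) ^ (2 : ℝ) with hB
  set G := ∫⁻ x, (‖fderiv ℝ v x‖₊ : ℝ≥0∞) ^ (2 : ℝ) with hG
  set S := ∫⁻ x, (‖v x‖₊ : ℝ≥0∞) ^ p'r with hS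
  have h4m : (0:ℝ) < 4 / m := by positivity
  have hq0 : 0 < q := by rw [hq]; linarith
  have hq2 : 0 ≤ q - 2 := by rw [hq]; linarith
  have hmeas : Measurable fun x : EuclideanSpace ℝ (Fin M) => (‖v x‖₊ : ℝ≥0∞) :=
    (continuous_nnnorm.comp hvc).measurable.coe_nnreal_ennreal
  have holder : A ≤ B ^ (2 / m) * S ^ ((m - 2) / m) := by
    have hconj : (m / 2).HolderConjugate (m / (m - 2)) := by
      rw [Real.holderConjugate_iff]
      constructor
      · rw [lt_div_iff₀ (by norm_num : (0:ℝ) < 2)]; linarith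
      · rw [hm] at *; field_simp; ring
    have h := ENNReal.lintegral_mul_le_Lp_mul_Lq (volume : Measure (EuclideanSpace ℝ (Fin M)))
      hconj (f := fun x => (‖v x‖₊ : ℝ≥0∞) ^ (q - 2))
      (g := fun x => (‖v x‖₊ : ℝ≥0∞) ^ (2 : ℝ))
      (hmeas.pow_const _).aemeasurable (hmeas.pow_const _).aemeasurable
    have e1 : ∀ x : EuclideanSpace ℝ (Fin M),
        (‖v x‖₊ : ℝ≥0∞) ^ (q - 2) * (‖v x‖₊ : ℝ≥0∞) ^ (2 : ℝ) = (‖v x‖₊ : ℝ≥0∞) ^ q := by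
      intro x
      rw [← ENNReal.rpow_add_of_nonneg _ _ hq2 (by norm_num)]
      ring_nf
    have e2 : ∀ x : EuclideanSpace ℝ (Fin M),
        ((‖v x‖₊ : ℝ≥0∞) ^ (q - 2)) ^ (m / 2) = (‖v x‖₊ : ℝ≥0∞) ^ (2 : ℝ) := by
      intro x
      rw [← ENNReal.rpow_mul]
      congr 1
      rw [hq]
      field_simp
      ring
    have e3 : ∀ x : EuclideanSpace ℝ (Fin M),
        ((‖v x‖₊ : ℝ≥0∞) ^ (2 : ℝ)) ^ (m / (m - 2)) = (‖v x‖₊ : ℝ≥0∞) ^ p'r := by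
      intro x
      rw [← ENNReal.rpow_mul]
      congr 1
      rw [hp'r]; field_simp
    simp only [Pi.mul_apply, e1, e2, e3] at h
    have eq4 : 1 / (m / 2) = 2 / m := by field_simp
    have eq5 : 1 / (m / (m - 2)) = (m - 2) / m := by
      rw [one_div_div]
    rw [eq4, eq5] at h
    exact h
  have sobolev : S ^ ((m - 2) / m) ≤ (C : ℝ≥0∞) ^ (2 : ℝ) * G := by
    have hfr : (Module.finrank ℝ (EuclideanSpace ℝ (Fin M)) : ℝ) = m := by
      rw [finrank_euclideanSpace_fin]
    have hn : 0 < Module.finrank ℝ (EuclideanSpace ℝ (Fin M)) := by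
      rw [finrank_euclideanSpace_fin]; omega
    have hp' : ((p' : ℝ))⁻¹ = ((2 : ℝ≥0) : ℝ)⁻¹ - (Module.finrank ℝ (EuclideanSpace ℝ (Fin M)) : ℝ)⁻¹ := by
      rw [hp'coe, hfr, hp'r]
      push_cast
      rw [div_eq_mul_inv, mul_inv, inv_inv]
      field_simp
    have hsob := eLpNorm_le_eLpNorm_fderiv_of_eq
      (μ := (volume : Measure (EuclideanSpace ℝ (Fin M))))
      (u := v) hv hcs (p := 2) (p' := p') (by norm_num) hn hp'
    have hS1 : eLpNorm v (p' : ℝ≥0∞) volume = S ^ (1 / p'r) := by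
      rw [eLpNorm_eq_lintegral_rpow_enorm_toReal (ENNReal.coe_ne_zero.mpr hp'0) ENNReal.coe_ne_top]
      rw [ENNReal.coe_toReal, hp'coe, hS, one_div]
      rfl
    have hG1 : eLpNorm (fderiv ℝ v) ((2 : ℝ≥0) : ℝ≥0∞) volume = G ^ (1 / (2:ℝ)) := by
      rw [eLpNorm_eq_lintegral_rpow_enorm_toReal (by norm_num) (by norm_num)]
      rw [ENNReal.coe_toReal, hG, one_div]
      norm_num
      rfl
    have h2 := ENNReal.rpow_le_rpow hsob (z := 2) (by norm_num)
    rw [hS1, hG1] at h2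
    rw [← ENNReal.rpow_mul S, ENNReal.mul_rpow_of_nonneg _ _ (by norm_num : (0:ℝ) ≤ 2),
      ← ENNReal.rpow_mul G] at h2
    have e6 : 1 / p'r * 2 = (m - 2) / m := by rw [hp'r]; field_simp
    have e7 : 1 / (2:ℝ) * 2 = 1 := by norm_num
    rw [e6, e7, ENNReal.rpow_one] at h2
    exact h2
  have key : A ≤ B ^ (2 / m) * ((C : ℝ≥0∞) ^ (2 : ℝ) * G) :=
    le_trans holder (mul_le_mul_right sobolev _)
  
  -- convert to real integrals
  have hBr0 : 0 ≤ ∫ x, (v x) ^ 2 := integral_nonneg fun x => sq_nonneg _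
  have hGr0 : 0 ≤ ∫ x, ‖fderiv ℝ v x‖ ^ 2 := integral_nonneg fun x => sq_nonneg _
  have hAr : A = ENNReal.ofReal (∫ x, |v x| ^ q) := by
    rw [hA, lint_rpow v hvc hcs hq0]
    simp [Real.norm_eq_abs]
  have e2n : ∀ s : ℝ, |s| ^ (2 : ℝ) = s ^ 2 := by
    intro s
    rw [show (2:ℝ) = ((2:ℕ):ℝ) from by norm_num, Real.rpow_natCast, sq_abs]
  have hBr : B = ENNReal.ofReal (∫ x, (v x) ^ 2) := by
    rw [hB, lint_rpow v hvc hcs (by norm_num : (0:ℝ) < 2)]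
    simp [Real.norm_eq_abs, e2n]
  have hGr : G = ENNReal.ofReal (∫ x, ‖fderiv ℝ v x‖ ^ 2) := by
    rw [hG, lint_rpow (fderiv ℝ v) hfc hfcs (by norm_num : (0:ℝ) < 2)]
    congr 1
    apply integral_congr_ae
    filter_upwards with x
    rw [show (2:ℝ) = ((2:ℕ):ℝ) from by norm_num, Real.rpow_natCast]
  have hCe : (C : ℝ≥0∞) ^ (2 : ℝ) = ENNReal.ofReal ((C : ℝ) ^ 2) := by
    rw [show ((C:ℝ) ^ 2) = (C:ℝ) ^ (2:ℝ) from by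
      rw [show (2:ℝ) = ((2:ℕ):ℝ) from by norm_num, Real.rpow_natCast]]
    rw [← ENNReal.ofReal_rpow_of_nonneg C.coe_nonneg (by norm_num : (0:ℝ) ≤ 2),
      ENNReal.ofReal_coe_nnreal]
  rw [hAr, hBr, hGr, hCe] at key
  rw [ENNReal.ofReal_rpow_of_nonneg hBr0 (by positivity),
    ← ENNReal.ofReal_mul (by positivity : (0:ℝ) ≤ (C:ℝ) ^ 2),
    ← ENNReal.ofReal_mul (by positivity)] at key
  have fin := (ENNReal.ofReal_le_ofReal_iff (by positivity)).1 key
  calc ∫ x, |v x| ^ q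
      ≤ (∫ x, (v x) ^ 2) ^ (2 / m) * ((C:ℝ) ^ 2 * ∫ x, ‖fderiv ℝ v x‖ ^ 2) := fin
    _ = (C:ℝ) ^ 2 * (∫ x, (v x) ^ 2) ^ (2 / m) * ∫ x, ‖fderiv ℝ v x‖ ^ 2 := by ring


lemma estimate (hM : 3 ≤ M) {a b : ℝ} (ha : 0 < a) (hab : a < b)
    {D : Set (EuclideanSpace ℝ (Fin M))} (hD : D = {x | a < ‖x‖ ∧ ‖x‖ < b})
    {μ : ℝ} (hμ : 0 ≤ μ) {q : ℝ} (hq : q = 2 + 4 / (M : ℝ))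
    {F : ℝ → ℝ} (hFc : Continuous F) {C₁ : ℝ} (hC₁p : 0 < C₁)
    (hC₁ : ∀ s : ℝ, F s ≤ 1/2 * s ^ 2 + C₁/q * |s| ^ q)
    {SC : ℝ} (hSC : 0 ≤ SC)
    (hgn : ∀ v : EuclideanSpace ℝ (Fin M) → ℝ, ContDiff ℝ 1 v → HasCompactSupport v →
      ∫ x, |v x| ^ q ≤ SC * (∫ x, (v x) ^ 2) ^ (2 / (M : ℝ)) * ∫ x, ‖fderiv ℝ v x‖ ^ 2)
    {c : ℝ} (hc : 0 < c)
    (v : EuclideanSpace ℝ (Fin M) → ℝ) (hv : H10mem D v)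
    (hmass : (∫ x in D, ‖x‖ ^ μ * (v x) ^ 2) = c ^ 2) :
    energy D μ F v ≥
      (1/2 - (b ^ μ * (C₁/q) * SC * ((a ^ μ)⁻¹) ^ (2/(M:ℝ))) * (c ^ 2) ^ (2/(M:ℝ))) *
        (∫ x in D, ‖gradient v x‖ ^ 2) - b ^ μ * (c ^ 2 / a ^ μ) / 2 := by
  obtain ⟨hv1, hv2, hv3⟩ := hv
  have hvc : Continuous v := hv1.continuous
  have hfc : Continuous (fderiv ℝ v) := ContDiff.continuous_fderiv hv1 one_ne_zero
  have hm3 : (3 : ℝ) ≤ (M : ℝ) := by exact_mod_cast hM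
  have hm0 : (0 : ℝ) < (M : ℝ) := by linarith
  have h4m : (0:ℝ) < 4 / (M : ℝ) := by positivity
  have hq0 : 0 < q := by rw [hq]; linarith
  have hb : (0:ℝ) < b := lt_trans ha hab
  have hapos : (0:ℝ) < a ^ μ := Real.rpow_pos_of_pos ha μ
  have hbpos : (0:ℝ) < b ^ μ := Real.rpow_pos_of_pos hb μ
  have hDopen : IsOpen D := by
    rw [hD]
    exact (isOpen_lt continuous_const continuous_norm).and
      (isOpen_lt continuous_norm continuous_const)
  have hDm : MeasurableSet D := hDopen.measurableSet
  have hDsub : D ⊆ Metric.closedBall 0 b := by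
    rw [hD]
    intro x hx
    rw [Metric.mem_closedBall, dist_zero_right]
    exact hx.2.le
  have hint : ∀ g : EuclideanSpace ℝ (Fin M) → ℝ, Continuous g → IntegrableOn g D volume :=
    fun g hg => (hg.continuousOn.integrableOn_compact
      (isCompact_closedBall (0 : EuclideanSpace ℝ (Fin M)) b)).mono_set hDsub
  have hcnorm : Continuous fun x : EuclideanSpace ℝ (Fin M) => ‖x‖ ^ μ :=
    continuous_norm.rpow_const (fun x => Or.inr hμ)
  have hcv2 : Continuous fun x => (v x) ^ 2 := hvc.pow 2
  have hcabsq : Continuous fun x => |v x| ^ q :=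
    (hvc.abs).rpow_const (fun x => Or.inr hq0.le)
  have hsubv : ∀ x, x ∉ D → v x = 0 :=
    fun x hx => image_eq_zero_of_notMem_tsupport (fun h => hx (hv3 h))
  have hsubf : ∀ x, x ∉ D → fderiv ℝ v x = 0 := by
    intro x hx
    by_contra h0
    exact hx (hv3 (support_fderiv_subset ℝ (Function.mem_support.mpr h0)))
  set T := ∫ x in D, ‖gradient v x‖ ^ 2 with hT
  have hTgrad : T = ∫ x, ‖fderiv ℝ v x‖ ^ 2 := by
    have h1 : ∀ x, ‖gradient v x‖ ^ 2 = ‖fderiv ℝ v x‖ ^ 2 :=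
      fun x => by rw [norm_gradient_eq]
    rw [hT]
    simp only [h1]
    exact setIntegral_eq_integral_of_forall_compl_eq_zero
      fun x hx => by rw [hsubf x hx]; simp
  have hT0 : 0 ≤ T := integral_nonneg fun x => sq_nonneg _
  have hv2int : ∫ x, (v x) ^ 2 = ∫ x in D, (v x) ^ 2 :=
    (setIntegral_eq_integral_of_forall_compl_eq_zero
      fun x hx => by rw [hsubv x hx]; ring).symm
  have hvqint : ∫ x, |v x| ^ q = ∫ x in D, |v x| ^ q :=
    (setIntegral_eq_integral_of_forall_compl_eq_zero
      fun x hx => by rw [hsubv x hx]; simp [Real.zero_rpow hq0.ne']).symm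
  -- mass bound
  have hmass2 : ∫ x in D, (v x) ^ 2 ≤ c ^ 2 / a ^ μ := by
    have key : a ^ μ * ∫ x in D, (v x) ^ 2 ≤ c ^ 2 := by
      rw [← hmass, ← integral_const_mul]
      apply setIntegral_mono_on (hint _ (continuous_const.mul hcv2))
        (hint _ (hcnorm.mul hcv2)) hDm
      intro x hx
      rw [hD] at hx
      exact mul_le_mul_of_nonneg_right
        (Real.rpow_le_rpow ha.le hx.1.le hμ) (sq_nonneg _)
    rw [le_div_iff₀ hapos]
    linarith
  have hI20 : 0 ≤ ∫ x in D, (v x) ^ 2 := integral_nonneg fun x => sq_nonneg _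
  -- q-norm bound
  have hIq : ∫ x in D, |v x| ^ q ≤ SC * (c ^ 2 / a ^ μ) ^ (2/(M:ℝ)) * T := by
    rw [← hvqint, hTgrad]
    refine le_trans (hgn v hv1 hv2) ?_
    have h1 : (∫ x, (v x) ^ 2) ^ (2/(M:ℝ)) ≤ (c ^ 2 / a ^ μ) ^ (2/(M:ℝ)) := by
      apply Real.rpow_le_rpow (by rw [hv2int]; exact hI20) ?_ (by positivity)
      rw [hv2int]; exact hmass2
    have h2 : (0:ℝ) ≤ ∫ x, ‖fderiv ℝ v x‖ ^ 2 := integral_nonneg fun x => sq_nonneg _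
    exact mul_le_mul_of_nonneg_right (mul_le_mul_of_nonneg_left h1 hSC) h2
  have hIq0 : 0 ≤ ∫ x in D, |v x| ^ q :=
    integral_nonneg fun x => Real.rpow_nonneg (abs_nonneg _) q
  -- F-term bound
  set g := fun x => 1/2 * (v x) ^ 2 + C₁/q * |v x| ^ q with hg
  have hCq0 : (0:ℝ) ≤ C₁/q := div_nonneg hC₁p.le hq0.le
  have hg0 : ∀ x, 0 ≤ g x := fun x =>
    add_nonneg (by positivity) (mul_nonneg hCq0 (Real.rpow_nonneg (abs_nonneg _) q))
  have hcg : Continuous g := (continuous_const.mul hcv2).add (continuous_const.mul hcabsq)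
  have hFbound : ∫ x in D, ‖x‖ ^ μ * F (v x) ≤ ∫ x in D, b ^ μ * g x := by
    apply setIntegral_mono_on (hint _ (hcnorm.mul (hFc.comp hvc)))
      (hint _ (continuous_const.mul hcg)) hDm
    intro x hx
    rw [hD] at hx
    calc ‖x‖ ^ μ * F (v x) ≤ ‖x‖ ^ μ * g x :=
          mul_le_mul_of_nonneg_left (hC₁ (v x)) (Real.rpow_nonneg (norm_nonneg _) μ)
      _ ≤ b ^ μ * g x :=
          mul_le_mul_of_nonneg_right
            (Real.rpow_le_rpow (norm_nonneg _) hx.2.le hμ) (hg0 x)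
  have hsplit : ∫ x in D, b ^ μ * g x
      = b ^ μ * (1/2 * (∫ x in D, (v x) ^ 2) + C₁/q * ∫ x in D, |v x| ^ q) := by
    rw [integral_const_mul]
    congr 1
    rw [hg]
    rw [integral_add ((hint (fun x => 1/2 * (v x) ^ 2) (continuous_const.mul hcv2)))
      ((hint (fun x => C₁/q * |v x| ^ q) (continuous_const.mul hcabsq))), integral_const_mul, integral_const_mul]
  have hP : ∫ x in D, ‖x‖ ^ μ * F (v x)
      ≤ (b ^ μ * (C₁/q) * SC * ((a ^ μ)⁻¹) ^ (2/(M:ℝ))) * (c ^ 2) ^ (2/(M:ℝ)) * T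
        + b ^ μ * (c ^ 2 / a ^ μ) / 2 := by
    have h5 : 1/2 * (∫ x in D, (v x) ^ 2) + C₁/q * ∫ x in D, |v x| ^ q
        ≤ 1/2 * (c ^ 2 / a ^ μ) + C₁/q * (SC * (c ^ 2 / a ^ μ) ^ (2/(M:ℝ)) * T) := by
      have h6 := mul_le_mul_of_nonneg_left hIq hCq0
      linarith
    have hprod : (c ^ 2 / a ^ μ) ^ (2/(M:ℝ))
        = (c ^ 2) ^ (2/(M:ℝ)) * ((a ^ μ)⁻¹) ^ (2/(M:ℝ)) := by
      rw [div_eq_mul_inv, Real.mul_rpow (by positivity) (by positivity)]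
    calc ∫ x in D, ‖x‖ ^ μ * F (v x) ≤ ∫ x in D, b ^ μ * g x := hFbound
      _ = b ^ μ * (1/2 * (∫ x in D, (v x) ^ 2) + C₁/q * ∫ x in D, |v x| ^ q) := hsplit
      _ ≤ b ^ μ * (1/2 * (c ^ 2 / a ^ μ) + C₁/q * (SC * (c ^ 2 / a ^ μ) ^ (2/(M:ℝ)) * T)) :=
          mul_le_mul_of_nonneg_left h5 hbpos.le
      _ = (b ^ μ * (C₁/q) * SC * ((a ^ μ)⁻¹) ^ (2/(M:ℝ))) * (c ^ 2) ^ (2/(M:ℝ)) * T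
          + b ^ μ * (c ^ 2 / a ^ μ) / 2 := by rw [hprod]; ring
  have henergy : energy D μ F v = 1/2 * T - ∫ x in D, ‖x‖ ^ μ * F (v x) := rfl
  rw [henergy]
  linarith [hP]

/-- in the mass-critical case `q = 2 + 4/M`, there exists `c₁ > 0` such that for
every `0 < c < c₁` the functional `E` is coercive and bounded below on
`S_c = {v ∈ H¹₀(D) : ∫_D |x|^μ v² = c²}`. -/
theorem stmt_3 {M : ℕ} (hM : 3 ≤ M) (a b : ℝ) (ha : 0 < a) (hab : a < b)
    (D : Set (EuclideanSpace ℝ (Fin M))) (hD : D = {x | a < ‖x‖ ∧ ‖x‖ < b})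
    (μ : ℝ) (hμ : 0 ≤ μ) (q : ℝ) (hq : q = 2 + 4 / (M : ℝ))
    (F : ℝ → ℝ) (hFc : Continuous F)
    (hF : ∀ ε : ℝ, 0 < ε → ∃ Cε : ℝ, 0 < Cε ∧ ∀ s : ℝ, F s ≤ ε / 2 * s ^ 2 + Cε / q * |s| ^ q) :
    ∃ c₁ : ℝ, 0 < c₁ ∧ ∀ c : ℝ, 0 < c → c < c₁ →
      BddBelow (energy D μ F ''
          {v | H10mem D v ∧ (∫ x in D, ‖x‖ ^ μ * (v x) ^ 2) = c ^ 2}) ∧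
      ∀ v : ℕ → EuclideanSpace ℝ (Fin M) → ℝ,
        (∀ n, H10mem D (v n) ∧ (∫ x in D, ‖x‖ ^ μ * (v n x) ^ 2) = c ^ 2) →
        Tendsto (fun n => ∫ x in D, ‖gradient (v n) x‖ ^ 2) atTop atTop →
        Tendsto (fun n => energy D μ F (v n)) atTop atTop := by
  obtain ⟨C₁, hC₁p, hC₁⟩ := hF 1 one_pos
  have hC₁' : ∀ s : ℝ, F s ≤ 1/2 * s ^ 2 + C₁/q * |s| ^ q := by
    intro s
    have := hC₁ s
    linarith
  obtain ⟨SC, hSC, hgn⟩ := gn hM hq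
  have hm3 : (3:ℝ) ≤ (M:ℝ) := by exact_mod_cast hM
  have hm0 : (0:ℝ) < (M:ℝ) := by linarith
  have h4m : (0:ℝ) < 4 / (M:ℝ) := by positivity
  have hq0 : 0 < q := by rw [hq]; linarith
  have hb : (0:ℝ) < b := lt_trans ha hab
  have hapos : (0:ℝ) < a ^ μ := Real.rpow_pos_of_pos ha μ
  have hbpos : (0:ℝ) < b ^ μ := Real.rpow_pos_of_pos hb μ
  set κ := b ^ μ * (C₁/q) * SC * ((a ^ μ)⁻¹) ^ (2/(M:ℝ)) with hκ
  have hκ0 : 0 ≤ κ := by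
    apply mul_nonneg (mul_nonneg (mul_nonneg hbpos.le (div_nonneg hC₁p.le hq0.le)) hSC)
    exact Real.rpow_nonneg (inv_nonneg.mpr hapos.le) _
  set d := (1/(4*κ+1) : ℝ) ^ ((M:ℝ)/4) with hd
  have hdpos : 0 < d := Real.rpow_pos_of_pos (by positivity) _
  refine ⟨min 1 d, lt_min one_pos hdpos, ?_⟩
  intro c hc hcd
  have hcoef : κ * (c ^ 2) ^ (2/(M:ℝ)) ≤ 1/4 := by
    have hcd' : c ≤ d := le_of_lt (lt_of_lt_of_le hcd (min_le_right _ _))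
    have h2 : c ^ 2 ≤ d ^ 2 := by nlinarith
    have h3 : (c ^ 2 : ℝ) ^ (2/(M:ℝ)) ≤ (d ^ 2) ^ (2/(M:ℝ)) :=
      Real.rpow_le_rpow (by positivity) h2 (by positivity)
    have h4 : (d ^ 2 : ℝ) ^ (2/(M:ℝ)) = 1/(4*κ+1) := by
      rw [hd, ← Real.rpow_natCast ((1/(4*κ+1)) ^ ((M:ℝ)/4)) 2,
        ← Real.rpow_mul (by positivity), ← Real.rpow_mul (by positivity)]
      rw [show (M:ℝ)/4 * ((2:ℕ) * (2/(M:ℝ))) = 1 by push_cast; field_simp; ring]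
      exact Real.rpow_one _
    have h5 : κ * (c ^ 2) ^ (2/(M:ℝ)) ≤ κ * (1/(4*κ+1)) :=
      mul_le_mul_of_nonneg_left (by linarith) hκ0
    have h6 : κ * (1/(4*κ+1)) ≤ 1/4 := by
      rw [mul_one_div, div_le_iff₀ (by positivity)]
      linarith
    linarith
  have hest : ∀ w : EuclideanSpace ℝ (Fin M) → ℝ, H10mem D w →
      (∫ x in D, ‖x‖ ^ μ * (w x) ^ 2) = c ^ 2 →
      energy D μ F w ≥ 1/4 * (∫ x in D, ‖gradient w x‖ ^ 2) - b ^ μ * (c ^ 2 / a ^ μ) / 2 := by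
    intro w hw hmass
    have h := estimate hM ha hab hD hμ hq hFc hC₁p hC₁' hSC hgn hc w hw hmass
    rw [← hκ] at h
    have hT0 : 0 ≤ ∫ x in D, ‖gradient w x‖ ^ 2 := integral_nonneg fun x => sq_nonneg _
    have hco : (1:ℝ)/4 ≤ 1/2 - κ * (c ^ 2) ^ (2/(M:ℝ)) := by linarith
    nlinarith [mul_le_mul_of_nonneg_right hco hT0]
  constructor
  · refine ⟨-(b ^ μ * (c ^ 2 / a ^ μ) / 2), ?_⟩
    rintro y ⟨w, ⟨hwm, hwmass⟩, rfl⟩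
    have h := hest w hwm hwmass
    have hT0 : 0 ≤ ∫ x in D, ‖gradient w x‖ ^ 2 := integral_nonneg fun x => sq_nonneg _
    linarith
  · intro v hvs hTts
    apply tendsto_atTop_mono (fun n => hest (v n) (hvs n).1 (hvs n).2)
    have h1 : Tendsto (fun n => 1/4 * (∫ x in D, ‖gradient (v n) x‖ ^ 2)) atTop atTop :=
      hTts.const_mul_atTop (by norm_num)
    simpa [sub_eq_add_neg] using
      tendsto_atTop_add_const_right atTop (-(b ^ μ * (c ^ 2 / a ^ μ) / 2)) h1
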